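/- arXiv:2604.08408 — 7 statements merged into one kernel-verified Lean document; each statement's English description precedes it below -/
import Mathlib

section
/- For any real numbers α, L > 0 and any integer k ≥ 0, define A_{k,t} for integers 0 ≤ k ≤ t by A_{k,t} = Σ over bitstrings c ∈ {0,1}^t with c_1+⋯+c_t = k of Π_{j∈[t]} ( [c_j=1] + [c_j=0]·(c_1+⋯+c_{j-1})·L ). Then Σ_{t≥k} (α^t/t!)·A_{k,t} = (1/k!)·((e^{αL}−1)/L)^k. -/
open Finset

/-- `A L k t` = sum over bitstrings `c ∈ {0,1}^t` with `k` ones of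
`∏_{j∈[t]} ([c_j = 1] + [c_j = 0]·(c_1+⋯+c_{j-1})·L)`. (It vanishes for `t < k`.) -/
noncomputable def clusterA (L : ℝ) (k t : ℕ) : ℝ :=
  ∑ c ∈ Finset.univ.filter
      (fun c : Fin t → Bool => (Finset.univ.filter (fun j => c j = true)).card = k),
    ∏ j : Fin t,
      (if c j = true then (1 : ℝ)
       else ((Finset.univ.filter (fun i : Fin t => i < j ∧ c i = true)).card : ℝ) * L)

-- number of ones
def ones {t : ℕ} (c : Fin t → Bool) : ℕ := (Finset.univ.filter (fun j => c j = true)).card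

noncomputable def w (L : ℝ) {t : ℕ} (c : Fin t → Bool) : ℝ :=
  ∏ j : Fin t,
      (if c j = true then (1 : ℝ)
       else ((Finset.univ.filter (fun i : Fin t => i < j ∧ c i = true)).card : ℝ) * L)

lemma clusterA_eq (L : ℝ) (k t : ℕ) :
    clusterA L k t = ∑ c : Fin t → Bool, if ones c = k then w L c else 0 := by
  rw [clusterA, Finset.sum_filter]; rfl

lemma ones_snoc {t : ℕ} (c : Fin t → Bool) (b : Bool) :
    ones (Fin.snoc c b : Fin (t+1) → Bool) = ones c + (if b then 1 else 0) := by
  classical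
  simp only [ones, Finset.card_filter]
  rw [Fin.sum_univ_castSucc]
  simp [Fin.snoc_castSucc, Fin.snoc_last]

lemma before_snoc {t : ℕ} (c : Fin t → Bool) (b : Bool) (j : Fin t) :
    (Finset.univ.filter (fun i : Fin (t+1) => i < j.castSucc ∧ (Fin.snoc c b : Fin (t+1) → Bool) i = true)).card
      = (Finset.univ.filter (fun i : Fin t => i < j ∧ c i = true)).card := by
  classical
  simp only [Finset.card_filter]
  rw [Fin.sum_univ_castSucc]
  have hlast : ¬ (Fin.last t < j.castSucc) := (Fin.castSucc_lt_last j).asymm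
  simp [Fin.snoc_castSucc, Fin.snoc_last, hlast, Fin.castSucc_lt_castSucc_iff]

lemma before_snoc_last {t : ℕ} (c : Fin t → Bool) (b : Bool) :
    (Finset.univ.filter (fun i : Fin (t+1) => i < Fin.last t ∧ (Fin.snoc c b : Fin (t+1) → Bool) i = true)).card
      = ones c := by
  classical
  simp only [ones, Finset.card_filter]
  rw [Fin.sum_univ_castSucc]
  simp [Fin.snoc_castSucc, Fin.snoc_last, Fin.castSucc_lt_last]

lemma w_snoc (L : ℝ) {t : ℕ} (c : Fin t → Bool) (b : Bool) :
    w L (Fin.snoc c b : Fin (t+1) → Bool)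
      = w L c * (if b then (1:ℝ) else (ones c : ℝ) * L) := by
  classical
  rw [w, Fin.prod_univ_castSucc]
  refine congrArg₂ (· * ·) ?_ ?_
  · apply Finset.prod_congr rfl
    intro j _
    rw [Fin.snoc_castSucc, before_snoc]
  · rw [Fin.snoc_last, before_snoc_last]

def snocEquiv (t : ℕ) : ((Fin t → Bool) × Bool) ≃ (Fin (t+1) → Bool) where
  toFun p := Fin.snoc p.1 p.2
  invFun c := (fun i => c i.castSucc, c (Fin.last t))
  left_inv p := by simp
  right_inv c := by
    funext i
    induction i using Fin.lastCases with
    | last => simp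
    | cast i => simp

lemma clusterA_succ (L : ℝ) (k t : ℕ) :
    clusterA L k (t+1)
      = (∑ c : Fin t → Bool, if ones c + 1 = k then w L c else 0)
        + (k : ℝ) * L * clusterA L k t := by
  classical
  rw [clusterA_eq]
  rw [← Equiv.sum_comp (snocEquiv t)]
  rw [Fintype.sum_prod_type]
  have : ∀ c : Fin t → Bool, ∑ b : Bool,
      (if ones (snocEquiv t (c, b)) = k then w L (snocEquiv t (c, b)) else 0)
      = (if ones c + 1 = k then w L c else 0)
        + (if ones c = k then w L c * ((k:ℝ) * L) else 0) := by
    intro c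
    rw [Fintype.sum_bool]
    show (if ones (Fin.snoc c true : Fin (t+1) → Bool) = k then w L (Fin.snoc c true : Fin (t+1) → Bool) else 0)
       + (if ones (Fin.snoc c false : Fin (t+1) → Bool) = k then w L (Fin.snoc c false : Fin (t+1) → Bool) else 0) = _
    rw [ones_snoc, ones_snoc, w_snoc, w_snoc]
    simp only [if_true, if_false, Bool.false_eq_true, add_zero, mul_one]
    refine congrArg₂ (· + ·) rfl ?_
    split_ifs with h
    · rw [h]
    · rfl
  rw [Finset.sum_congr rfl (fun c _ => this c), Finset.sum_add_distrib]
  refine congrArg₂ (· + ·) rfl ?_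
  rw [clusterA_eq, Finset.mul_sum]
  apply Finset.sum_congr rfl
  intro c _
  split_ifs <;> ring

lemma clusterA_zero_iff (L : ℝ) (t : ℕ) : clusterA L 0 (t+1) = 0 := by
  rw [clusterA_succ]
  simp [clusterA_eq]

lemma clusterA_zero_right (L : ℝ) (k : ℕ) : clusterA L k 0 = if k = 0 then 1 else 0 := by
  rw [clusterA_eq]
  rw [Fintype.sum_eq_single (fun _ => true)]
  · simp [ones, w, eq_comm]
  · intro c hc
    exact absurd (funext fun i => Fin.elim0 i) hc

lemma clusterA_succ_succ (L : ℝ) (k t : ℕ) :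
    clusterA L (k+1) (t+1) = clusterA L k t + ((k:ℝ)+1) * L * clusterA L (k+1) t := by
  rw [clusterA_succ, clusterA_eq L k t]
  push_cast
  refine congrArg₂ (· + ·) ?_ rfl
  apply Finset.sum_congr rfl
  intro c _
  simp

noncomputable def T (k t : ℕ) : ℝ :=
  ∑ j ∈ Finset.range (k+1), (-1:ℝ)^(k-j) * (k.choose j : ℝ) * (j:ℝ)^t

lemma negpow (n j : ℕ) (h : j ≤ n) : (-1:ℝ)^(n-j) = (-1)^n * (-1)^j := by
  have h2 : ((-1:ℝ)^n * (-1)^j) = (-1:ℝ)^(n-j) := by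
    rw [← pow_add, show n + j = (n - j) + 2*j by omega, pow_add, pow_mul]
    norm_num
  exact h2.symm

lemma T_zero (k : ℕ) : T (k+1) 0 = 0 := by
  have halt : ∑ j ∈ Finset.range (k+2), (-1:ℝ)^j * ((k+1).choose j : ℝ) = 0 := by
    have h := Int.alternating_sum_range_choose_of_ne (n := k+1) (by omega)
    have := congrArg (fun z : ℤ => (z : ℝ)) h
    push_cast at this
    convert this using 1
  rw [T]
  calc ∑ j ∈ Finset.range (k+2), (-1:ℝ)^(k+1-j) * ((k+1).choose j : ℝ) * (j:ℝ)^0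
      = (-1:ℝ)^(k+1) * ∑ j ∈ Finset.range (k+2), (-1:ℝ)^j * ((k+1).choose j : ℝ) := by
        rw [Finset.mul_sum]
        apply Finset.sum_congr rfl
        intro j hj
        rw [Finset.mem_range] at hj
        rw [negpow (k+1) j (by omega)]
        ring
    _ = 0 := by rw [halt]; ring

lemma T_rec (k t : ℕ) : T (k+1) (t+1) = ((k:ℝ)+1) * (T k t + T (k+1) t) := by
  have hsplit : T (k+1) (t+1)
      = ∑ j ∈ Finset.range (k+2),
          ((-1:ℝ)^(k+1-j) * (((k:ℝ)+1) * (((k+1).choose j : ℕ) : ℝ)) * (j:ℝ)^t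
           - (-1:ℝ)^(k+1-j) * (((k:ℝ)+1) * ((k.choose j : ℕ) : ℝ)) * (j:ℝ)^t) := by
    rw [T]
    apply Finset.sum_congr rfl
    intro j hj
    rw [Finset.mem_range] at hj
    have hj' : j ≤ k+1 := by omega
    have h0 := Nat.choose_mul_succ_eq k j
    have h : ((k.choose j * (k+1) : ℕ) : ℝ) = (((k+1).choose j * (k+1-j) : ℕ) : ℝ) := by
      exact_mod_cast congrArg (fun n : ℕ => (n : ℝ)) h0
    rw [Nat.cast_mul, Nat.cast_mul, Nat.cast_sub hj'] at h
    push_cast at h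
    have hkey : (((k+1).choose j : ℕ) : ℝ) * (j:ℝ)
        = ((k:ℝ)+1) * (((k+1).choose j : ℕ) : ℝ) - ((k:ℝ)+1) * ((k.choose j : ℕ) : ℝ) := by
      linarith
    have hpow : (j:ℝ)^(t+1) = (j:ℝ)^t * (j:ℝ) := by ring
    rw [hpow]
    linear_combination ((-1:ℝ)^(k+1-j) * (j:ℝ)^t) * hkey
  rw [hsplit, Finset.sum_sub_distrib]
  have hA : ∑ j ∈ Finset.range (k+2),
        (-1:ℝ)^(k+1-j) * (((k:ℝ)+1) * (((k+1).choose j : ℕ) : ℝ)) * (j:ℝ)^t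
      = ((k:ℝ)+1) * T (k+1) t := by
    rw [T, Finset.mul_sum]
    apply Finset.sum_congr rfl
    intro j _
    ring
  have hB : ∑ j ∈ Finset.range (k+2),
        (-1:ℝ)^(k+1-j) * (((k:ℝ)+1) * ((k.choose j : ℕ) : ℝ)) * (j:ℝ)^t
      = ((k:ℝ)+1) * (-(T k t)) := by
    rw [Finset.sum_range_succ, Nat.choose_succ_self]
    rw [T, mul_neg, Finset.mul_sum, ← Finset.sum_neg_distrib]
    simp only [Nat.cast_zero, mul_zero, zero_mul, add_zero]
    apply Finset.sum_congr rfl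
    intro j hj
    rw [Finset.mem_range] at hj
    rw [show k+1-j = (k-j)+1 by omega, pow_succ]
    ring
  rw [hA, hB]
  ring

lemma key (L : ℝ) (k t : ℕ) :
    clusterA L k t * ((k.factorial : ℝ) * L^k) = L^t * T k t := by
  induction t generalizing k with
  | zero =>
    rw [clusterA_zero_right]
    cases k with
    | zero => simp [T]
    | succ k => rw [T_zero]; simp
  | succ t ih =>
    cases k with
    | zero =>
      rw [clusterA_zero_iff]
      simp [T]
    | succ k =>
      rw [clusterA_succ_succ, T_rec]
      have h1 := ih k
      have h2 := ih (k+1)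
      rw [add_mul]
      have e1 : clusterA L k t * ((k+1).factorial * L^(k+1))
          = ((k:ℝ)+1) * L * (clusterA L k t * (k.factorial * L^k)) := by
        rw [Nat.factorial_succ]; push_cast; ring
      have e2 : ((k:ℝ)+1) * L * clusterA L (k+1) t * ((k+1).factorial * L^(k+1))
          = ((k:ℝ)+1) * L * (clusterA L (k+1) t * ((k+1).factorial * L^(k+1))) := by ring
      rw [e1, e2, h1, h2]
      ring

/-- For any `α, L > 0` and integer `k ≥ 0`,
`Σ_{t≥k} (α^t/t!)·A_{k,t} = (1/k!)·((e^{αL}−1)/L)^k`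
(the sum runs over all `t` since `A_{k,t} = 0` for `t < k`). -/
theorem sum_clusterA_eq (α L : ℝ) (hα : 0 < α) (hL : 0 < L) (k : ℕ) :
    ∑' t : ℕ, α ^ t / (t.factorial : ℝ) * clusterA L k t
      = 1 / (k.factorial : ℝ) * ((Real.exp (α * L) - 1) / L) ^ k := by
  have hL0 : L ≠ 0 := ne_of_gt hL
  have hfac : (k.factorial : ℝ) ≠ 0 := Nat.cast_ne_zero.mpr k.factorial_ne_zero
  have expser : ∀ x : ℝ, (∑' n : ℕ, x ^ n / (n.factorial : ℝ)) = Real.exp x := by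
    intro x
    rw [Real.exp_eq_exp_ℝ, NormedSpace.exp_eq_tsum_div]
  have hA : ∀ t, clusterA L k t = L ^ t * T k t / ((k.factorial : ℝ) * L ^ k) := by
    intro t
    have h := key L k t
    field_simp
    linarith
  have hterm : ∀ t, α ^ t / (t.factorial : ℝ) * clusterA L k t
      = ∑ j ∈ Finset.range (k+1), (1/((k.factorial:ℝ) * L^k)) *
          (((-1:ℝ)^(k-j) * (k.choose j : ℝ)) * (((j:ℝ)*(α*L))^t / (t.factorial:ℝ))) := by
    intro t
    rw [hA, T, Finset.mul_sum, Finset.sum_div, Finset.mul_sum]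
    apply Finset.sum_congr rfl
    intro j _
    rw [mul_pow, mul_pow]
    field_simp
  have hsumm : ∀ j ∈ Finset.range (k+1), Summable (fun t : ℕ =>
      (1/((k.factorial:ℝ) * L^k)) *
        (((-1:ℝ)^(k-j) * (k.choose j : ℝ)) * (((j:ℝ)*(α*L))^t / (t.factorial:ℝ)))) := by
    intro j _
    exact ((Real.summable_pow_div_factorial _).mul_left _).mul_left _
  rw [tsum_congr hterm, Summable.tsum_finsetSum hsumm]
  have hj : ∀ j ∈ Finset.range (k+1), ∑' (t : ℕ),
      (1/((k.factorial:ℝ) * L^k)) *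
        (((-1:ℝ)^(k-j) * (k.choose j : ℝ)) * (((j:ℝ)*(α*L))^t / (t.factorial:ℝ)))
      = (1/((k.factorial:ℝ) * L^k)) *
          ((-1:ℝ)^(k-j) * (k.choose j : ℝ) * Real.exp (α*L) ^ j) := by
    intro j _
    rw [tsum_mul_left, tsum_mul_left, expser ((j:ℝ)*(α*L))]
    rw [Real.exp_nat_mul]
  rw [Finset.sum_congr rfl hj, ← Finset.mul_sum]
  have hbin : ∑ j ∈ Finset.range (k+1),
      (-1:ℝ)^(k-j) * (k.choose j : ℝ) * Real.exp (α*L) ^ j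
      = (Real.exp (α*L) - 1)^k := by
    rw [show Real.exp (α*L) - 1 = Real.exp (α*L) + (-1) by ring, add_pow]
    apply Finset.sum_congr rfl
    intro j _
    ring
  rw [hbin, div_pow]
  field_simp
end

section
/- Let σ, β > 0 and let b₁(t) = (σ/(πβ)) ∫_0^∞ (e^{−2σ²(t+u)²} − e^{−2σ²(t−u)²})/sinh(2πu/β) du. Then ∫_{−∞}^{∞} |b₁(t)| dt ≤ (1/(√2·π^{3/2}))·( 2/√π + log(1 + (√2/π)·σβ) ). -/
open MeasureTheory Set Filter Real Topology

lemma tail_sinh (c U : ℝ) (hc : 0 < c) (hU : 0 < U) :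
    IntegrableOn (fun u => 1 / Real.sinh (c * u)) (Ioi U) ∧
      ∫ u in Ioi U, 1 / Real.sinh (c * u) ≤ (1 / c) * Real.log (1 + 2 / (c * U)) := by
  set f : ℝ → ℝ := fun u => (1 / c) * (Real.log (1 - Real.exp (-(c * u))) -
    Real.log (1 + Real.exp (-(c * u)))) with hf
  have hderiv : ∀ x ∈ Ici U, HasDerivAt f (1 / Real.sinh (c * x)) x := by
    intro x hx
    have hcx : 0 < c * x := mul_pos hc (hU.trans_le hx)
    have he1 : Real.exp (-(c * x)) < 1 := by
      rw [Real.exp_lt_one_iff]; linarith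
    have hepos : 0 < Real.exp (-(c * x)) := Real.exp_pos _
    have h0 : HasDerivAt (fun u : ℝ => -(c * u)) (-c) x := by
      exact (((hasDerivAt_id' x).const_mul c).neg).congr_deriv (by ring)
    have hE : HasDerivAt (fun u : ℝ => Real.exp (-(c * u)))
        (Real.exp (-(c * x)) * (-c)) x := h0.exp
    have h1 : HasDerivAt (fun u : ℝ => 1 - Real.exp (-(c * u)))
        (0 - Real.exp (-(c * x)) * (-c)) x := (hasDerivAt_const x (1:ℝ)).sub hE
    have h2 : HasDerivAt (fun u : ℝ => 1 + Real.exp (-(c * u)))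
        (0 + Real.exp (-(c * x)) * (-c)) x := (hasDerivAt_const x (1:ℝ)).add hE
    have h1ne : 1 - Real.exp (-(c * x)) ≠ 0 := by linarith
    have h2ne : 1 + Real.exp (-(c * x)) ≠ 0 := by positivity
    have h3 := (h1.log h1ne).sub (h2.log h2ne)
    have h4 := h3.const_mul (1 / c)
    refine h4.congr_deriv (Eq.symm ?_)
    have hsinh : Real.sinh (c * x) ≠ 0 := by
      have := Real.sinh_pos_iff.2 hcx; linarith
    rw [Real.sinh_eq]
    have hexp : Real.exp (c * x) = (Real.exp (-(c * x)))⁻¹ := by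
      rw [← Real.exp_neg]; ring_nf
    rw [hexp]
    have hE2 : 1 - Real.exp (-(c * x)) ^ 2 ≠ 0 := by nlinarith
    field_simp [hE2]
    ring
  have hpos : ∀ x ∈ Ioi U, 0 ≤ 1 / Real.sinh (c * x) := by
    intro x hx
    have : 0 < Real.sinh (c * x) := Real.sinh_pos_iff.2 (mul_pos hc (hU.trans hx))
    positivity
  have hT : Tendsto (fun u : ℝ => Real.exp (-(c * u))) atTop (𝓝 0) := by
    apply Real.tendsto_exp_atBot.comp
    exact tendsto_neg_atTop_atBot.comp (tendsto_id.const_mul_atTop hc)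
  have hlog1 : Tendsto (fun u : ℝ => Real.log (1 - Real.exp (-(c * u)))) atTop (𝓝 0) := by
    have h1 : Tendsto (fun u : ℝ => 1 - Real.exp (-(c * u))) atTop (𝓝 1) := by
      simpa using tendsto_const_nhds.sub hT
    have := ((Real.continuousAt_log (one_ne_zero)).tendsto).comp h1
    simpa [Function.comp_def] using this
  have hlog2 : Tendsto (fun u : ℝ => Real.log (1 + Real.exp (-(c * u)))) atTop (𝓝 0) := by
    have h1 : Tendsto (fun u : ℝ => 1 + Real.exp (-(c * u))) atTop (𝓝 1) := by
      simpa using tendsto_const_nhds.add hT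
    have := ((Real.continuousAt_log (one_ne_zero)).tendsto).comp h1
    simpa [Function.comp_def] using this
  have htend : Tendsto f atTop (𝓝 0) := by
    have := (hlog1.sub hlog2).const_mul (1 / c)
    rw [hf]
    simpa [one_div] using this
  refine ⟨integrableOn_Ioi_deriv_of_nonneg' hderiv hpos htend, ?_⟩
  rw [integral_Ioi_of_hasDerivAt_of_nonneg' hderiv hpos htend]
  -- show 0 - f U ≤ (1/c) * log (1 + 2/(c*U))
  have hcU : 0 < c * U := mul_pos hc hU
  set e := Real.exp (-(c * U)) with he
  have hepos : 0 < e := Real.exp_pos _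
  have he1 : e < 1 := by rw [he, Real.exp_lt_one_iff]; linarith
  have hkey : (c * U + 1) * e ≤ 1 := by
    have h1 : c * U + 1 ≤ Real.exp (c * U) := Real.add_one_le_exp _
    have h2 : Real.exp (c * U) * e = 1 := by
      rw [he, ← Real.exp_add]; simp
    nlinarith
  have hfU : 0 - f U = (1 / c) * (Real.log (1 + e) - Real.log (1 - e)) := by
    simp only [hf, he]; ring
  rw [hfU]
  have harg : (0:ℝ) < 1 + 2 / (c * U) := by positivity
  have hstep : Real.log (1 + e) - Real.log (1 - e) ≤ Real.log (1 + 2 / (c * U)) := by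
    rw [← Real.log_div (by positivity) (by linarith)]
    apply Real.log_le_log (div_pos (by linarith) (by linarith))
    rw [div_le_iff₀ (by linarith)]
    have h2 : 1 + 2 / (c * U) = (c * U + 2) / (c * U) := by field_simp
    rw [h2, div_mul_eq_mul_div, le_div_iff₀ hcU]
    nlinarith [hkey]
  have h1c : 0 ≤ 1 / c := by positivity
  calc (1/c) * (Real.log (1 + e) - Real.log (1 - e))
      ≤ (1/c) * Real.log (1 + 2 / (c * U)) := by
        exact mul_le_mul_of_nonneg_left hstep h1c
    _ = _ := rfl

lemma shift_sub (g : ℝ → ℝ) (u : ℝ) (s : Set ℝ) :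
    ∫ t in (fun x : ℝ => x - u) ⁻¹' s, g (t - u) = ∫ t in s, g t :=
  (measurePreserving_sub_right volume u).setIntegral_preimage_emb
    (MeasurableEquiv.subRight u).measurableEmbedding g s

lemma shift_add (g : ℝ → ℝ) (u : ℝ) (s : Set ℝ) :
    ∫ t in (fun x : ℝ => x + u) ⁻¹' s, g (t + u) = ∫ t in s, g t :=
  (measurePreserving_add_right volume u).setIntegral_preimage_emb
    (MeasurableEquiv.addRight u).measurableEmbedding g s

lemma middle_le (a u : ℝ) (ha : 0 < a) (hu : 0 ≤ u) :
    ∫ t in Ioc (-u) u, Real.exp (-a * t ^ 2) ≤ 2 * u := by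
  have hle : ∫ t in Ioc (-u) u, Real.exp (-a * t ^ 2) ≤ ∫ _t in Ioc (-u) u, (1:ℝ) := by
    apply setIntegral_mono_on
    · exact (integrable_exp_neg_mul_sq ha).integrableOn
    · exact integrableOn_const (by simp [Real.volume_Ioc])
    · exact measurableSet_Ioc
    · intro x _
      rw [Real.exp_le_one_iff]
      nlinarith [sq_nonneg x]
  have : ∫ _t in Ioc (-u) u, (1:ℝ) = 2 * u := by
    simp [Real.volume_Ioc]
    rw [max_eq_left (by linarith)]
    ring
  linarith

lemma half_right (a u : ℝ) (ha : 0 < a) (hu : 0 ≤ u) :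
    ∫ t in Ioi (0:ℝ), (Real.exp (-a * (t - u) ^ 2) - Real.exp (-a * (t + u) ^ 2)) ≤ 2 * u := by
  set g : ℝ → ℝ := fun s => Real.exp (-a * s ^ 2) with hg
  have hInt : Integrable g := integrable_exp_neg_mul_sq ha
  have hIntm : Integrable (fun t : ℝ => g (t - u)) := hInt.comp_sub_right u
  have hIntp : Integrable (fun t : ℝ => g (t + u)) := hInt.comp_add_right u
  have h1 : ∫ t in Ioi (0:ℝ), g (t - u) = ∫ t in Ioi (-u), g t := by
    rw [← shift_sub g u (Ioi (-u))]
    congr 1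
    ext x; simp [sub_lt_iff_lt_add', lt_sub_iff_add_lt]
  have h2 : ∫ t in Ioi (0:ℝ), g (t + u) = ∫ t in Ioi u, g t := by
    rw [← shift_add g u (Ioi u)]
    congr 1
    ext x; simp [lt_add_iff_pos_left]
  have h3 : ∫ t in Ioi (-u), g t
      = (∫ t in Ioc (-u) u, g t) + ∫ t in Ioi u, g t := by
    rw [← setIntegral_union (Ioc_disjoint_Ioi le_rfl) measurableSet_Ioi
      hInt.integrableOn hInt.integrableOn, Ioc_union_Ioi_eq_Ioi (by linarith)]
  have h4 : ∫ t in Ioi (0:ℝ), (g (t - u) - g (t + u))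
      = ∫ t in Ioc (-u) u, g t := by
    rw [integral_sub hIntm.integrableOn hIntp.integrableOn, h1, h2, h3]; ring
  rw [h4]
  exact middle_le a u ha hu

lemma half_left (a u : ℝ) (ha : 0 < a) (hu : 0 ≤ u) :
    ∫ t in Iic (0:ℝ), (Real.exp (-a * (t + u) ^ 2) - Real.exp (-a * (t - u) ^ 2)) ≤ 2 * u := by
  set g : ℝ → ℝ := fun s => Real.exp (-a * s ^ 2) with hg
  have hInt : Integrable g := integrable_exp_neg_mul_sq ha
  have hIntm : Integrable (fun t : ℝ => g (t - u)) := hInt.comp_sub_right u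
  have hIntp : Integrable (fun t : ℝ => g (t + u)) := hInt.comp_add_right u
  have h1 : ∫ t in Iic (0:ℝ), g (t + u) = ∫ t in Iic u, g t := by
    rw [← shift_add g u (Iic u)]
    congr 1
    ext x; simp
  have h2 : ∫ t in Iic (0:ℝ), g (t - u) = ∫ t in Iic (-u), g t := by
    rw [← shift_sub g u (Iic (-u))]
    congr 1
    ext x; simp [sub_le_iff_le_add']
  have h3 : ∫ t in Iic u, g t
      = (∫ t in Iic (-u), g t) + ∫ t in Ioc (-u) u, g t := by
    rw [← setIntegral_union (Iic_disjoint_Ioc le_rfl) measurableSet_Ioc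
      hInt.integrableOn hInt.integrableOn, Iic_union_Ioc_eq_Iic (by linarith)]
  have h4 : ∫ t in Iic (0:ℝ), (g (t + u) - g (t - u))
      = ∫ t in Ioc (-u) u, g t := by
    rw [integral_sub hIntp.integrableOn hIntm.integrableOn, h1, h2, h3]; ring
  rw [h4]
  exact middle_le a u ha hu

lemma sum_int (a u : ℝ) (ha : 0 < a) :
    ∫ t : ℝ, (Real.exp (-a * (t + u) ^ 2) + Real.exp (-a * (t - u) ^ 2))
      = 2 * Real.sqrt (Real.pi / a) := by
  set g : ℝ → ℝ := fun s => Real.exp (-a * s ^ 2) with hg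
  have hInt : Integrable g := integrable_exp_neg_mul_sq ha
  have hIntm : Integrable (fun t : ℝ => g (t - u)) := hInt.comp_sub_right u
  have hIntp : Integrable (fun t : ℝ => g (t + u)) := hInt.comp_add_right u
  rw [integral_add hIntp hIntm]
  have h1 : ∫ t : ℝ, g (t + u) = ∫ t : ℝ, g t := integral_add_right_eq_self g u
  have h2 : ∫ t : ℝ, g (t - u) = ∫ t : ℝ, g t := integral_sub_right_eq_self g u
  rw [h1, h2, hg]
  simp only []
  rw [integral_gaussian]
  ring

lemma const1 (s b sp s2 P : ℝ) (hs : 0 < s) (hb : 0 < b)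
    (hsp : sp * sp = Real.pi) (h2 : s2 * s2 = 2) (hP : sp * P = Real.pi ^ 2)
    (hsppos : 0 < sp) (hs2 : 0 < s2) (hPpos : 0 < P) :
    s / (Real.pi * b) * (4 / (2 * Real.pi / b) * (1 / (s2 * s))) = 1 / (s2 * P) * (2 / sp) := by
  have hπ : 0 < Real.pi := Real.pi_pos
  field_simp
  linear_combination 4 * hP

lemma const2 (s b sp s2 P : ℝ) (hs : 0 < s) (hb : 0 < b)
    (hsp : sp * sp = Real.pi) (h2 : s2 * s2 = 2) (hP : sp * P = Real.pi ^ 2)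
    (hsppos : 0 < sp) (hs2 : 0 < s2) (hPpos : 0 < P) :
    s / (Real.pi * b) * (2 * (sp / (s2 * s)) * (1 / (2 * Real.pi / b))) = 1 / (s2 * P) := by
  have hπ : 0 < Real.pi := Real.pi_pos
  field_simp
  linear_combination hP

lemma argval (s b s2 : ℝ) (hs : 0 < s) (hb : 0 < b) (h2 : s2 * s2 = 2) (hs2 : 0 < s2) :
    2 / ((2 * Real.pi / b) * (1 / (s2 * s))) = s2 / Real.pi * (s * b) := by
  have hπ : 0 < Real.pi := Real.pi_pos
  field_simp

lemma spP : Real.sqrt Real.pi * Real.pi ^ ((3:ℝ)/2) = Real.pi ^ 2 := by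
  rw [Real.sqrt_eq_rpow, ← Real.rpow_add Real.pi_pos]
  norm_num

lemma Kval (s : ℝ) (hs : 0 < s) :
    Real.sqrt (Real.pi / (2 * s ^ 2)) = Real.sqrt Real.pi / (Real.sqrt 2 * s) := by
  rw [Real.sqrt_div Real.pi_pos.le, Real.sqrt_mul (by norm_num : (0:ℝ) ≤ 2),
    Real.sqrt_sq hs.le]


/-- `L¹`-norm bound for the kernel
`b₁(t) = (σ/(πβ)) ∫_0^∞ (e^{−2σ²(t+u)²} − e^{−2σ²(t−u)²})/sinh(2πu/β) du`:
`∫ |b₁(t)| dt ≤ (1/(√2·π^{3/2}))·( 2/√π + log(1 + (√2/π)·σβ) )`. -/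
theorem b1_L1_bound (σ β : ℝ) (hσ : 0 < σ) (hβ : 0 < β) (b₁ : ℝ → ℝ)
    (hb₁ : ∀ t : ℝ, b₁ t
      = σ / (Real.pi * β) *
        ∫ u in Set.Ioi (0 : ℝ),
          (Real.exp (-2 * σ ^ 2 * (t + u) ^ 2) - Real.exp (-2 * σ ^ 2 * (t - u) ^ 2))
            / Real.sinh (2 * Real.pi * u / β)) :
    ∫ t : ℝ, |b₁ t|
      ≤ 1 / (Real.sqrt 2 * Real.pi ^ ((3 : ℝ) / 2)) *
        (2 / Real.sqrt Real.pi + Real.log (1 + Real.sqrt 2 / Real.pi * (σ * β))) := by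
  have hπ : (0:ℝ) < Real.pi := Real.pi_pos
  set c : ℝ := 2 * Real.pi / β with hc
  have hcpos : 0 < c := by positivity
  set U : ℝ := 1 / (Real.sqrt 2 * σ) with hU
  have hs2 : (0:ℝ) < Real.sqrt 2 := Real.sqrt_pos.2 (by norm_num)
  have hUpos : 0 < U := by positivity
  set a : ℝ := 2 * σ ^ 2 with ha
  have hapos : 0 < a := by positivity
  set K : ℝ := Real.sqrt (Real.pi / a) with hK
  have hKpos : 0 < K := Real.sqrt_pos.2 (by positivity)
  set C : ℝ := σ / (Real.pi * β) with hC
  have hCpos : 0 < C := by positivity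
  set L : ℝ := Real.log (1 + 2 / (c * U)) with hL
  -- the numerator and full integrand
  set num : ℝ → ℝ → ℝ := fun t u =>
    Real.exp (-a * (t + u) ^ 2) - Real.exp (-a * (t - u) ^ 2) with hnum
  set q : ℝ → ℝ → ℝ := fun t u => num t u / Real.sinh (c * u) with hq
  have harg : ∀ u : ℝ, 2 * Real.pi * u / β = c * u := fun u => by rw [hc]; ring
  have hb₁' : ∀ t : ℝ, b₁ t = C * ∫ u in Set.Ioi (0:ℝ), q t u := by
    intro t
    rw [hb₁ t]
    congr 1
    apply setIntegral_congr_fun measurableSet_Ioi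
    intro u _
    have h1 : -2*σ^2*(t+u)^2 = -a*(t+u)^2 := by rw [ha]; ring
    have h2 : -2*σ^2*(t-u)^2 = -a*(t-u)^2 := by rw [ha]; ring
    simp only [hq, hnum, harg u, h1, h2]
  -- measurability
  have hqmeas : Measurable (Function.uncurry q) := by
    apply Measurable.div
    · apply Measurable.sub <;> fun_prop
    · fun_prop
  -- pointwise bound
  have hpt : ∀ t : ℝ, (‖b₁ t‖₊ : ENNReal)
      ≤ ENNReal.ofReal C * ∫⁻ u in Set.Ioi (0:ℝ), (‖q t u‖₊ : ENNReal) := by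
    intro t
    rw [hb₁' t, nnnorm_mul, ENNReal.coe_mul]
    apply mul_le_mul'
    · exact le_of_eq (by rw [← enorm_eq_nnnorm, Real.enorm_eq_ofReal_abs, abs_of_pos hCpos])
    · exact enorm_integral_le_lintegral_enorm _
  -- for u > 0, the inner t-lintegral
  set M : ℝ → ENNReal := fun u => ∫⁻ t : ℝ, ENNReal.ofReal |num t u| with hM
  have hinner : ∀ u : ℝ, 0 < u →
      (∫⁻ t : ℝ, (‖q t u‖₊ : ENNReal))
        = M u * ENNReal.ofReal (1 / Real.sinh (c * u)) := by
    intro u hu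
    have hsinh : 0 < Real.sinh (c * u) := Real.sinh_pos_iff.2 (mul_pos hcpos hu)
    have heq : ∀ t : ℝ, (‖q t u‖₊ : ENNReal)
        = ENNReal.ofReal |num t u| * ENNReal.ofReal (1 / Real.sinh (c * u)) := by
      intro t
      rw [← enorm_eq_nnnorm, Real.enorm_eq_ofReal_abs, hq]
      simp only []
      rw [abs_div, abs_of_pos hsinh, div_eq_mul_one_div,
        ENNReal.ofReal_mul (abs_nonneg _)]
    simp_rw [heq]
    exact lintegral_mul_const' _ _ ENNReal.ofReal_ne_top
  -- bound (i) : M u ≤ 2K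
  have hMK : ∀ u : ℝ, M u ≤ ENNReal.ofReal (2 * K) := by
    intro u
    have hsum : Integrable (fun t : ℝ =>
        Real.exp (-a * (t + u) ^ 2) + Real.exp (-a * (t - u) ^ 2)) :=
      ((integrable_exp_neg_mul_sq hapos).comp_add_right u).add
        ((integrable_exp_neg_mul_sq hapos).comp_sub_right u)
    calc M u ≤ ∫⁻ t : ℝ, ENNReal.ofReal
          (Real.exp (-a * (t + u) ^ 2) + Real.exp (-a * (t - u) ^ 2)) := by
          apply lintegral_mono
          intro t
          apply ENNReal.ofReal_le_ofReal
          rw [hnum]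
          refine (abs_sub _ _).trans ?_
          rw [abs_of_pos (Real.exp_pos _), abs_of_pos (Real.exp_pos _)]
      _ = ENNReal.ofReal (∫ t : ℝ,
          (Real.exp (-a * (t + u) ^ 2) + Real.exp (-a * (t - u) ^ 2))) :=
          (ofReal_integral_eq_lintegral_ofReal hsum
            (ae_of_all _ fun t => by positivity)).symm
      _ = ENNReal.ofReal (2 * K) := by rw [sum_int a u hapos, hK]
  -- bound (ii) : for u > 0, M u ≤ 4u
  have hMu : ∀ u : ℝ, 0 < u → M u ≤ ENNReal.ofReal (4 * u) := by
    intro u hu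
    have hIntm : Integrable (fun t : ℝ => Real.exp (-a * (t - u) ^ 2)) :=
      (integrable_exp_neg_mul_sq hapos).comp_sub_right u
    have hIntp : Integrable (fun t : ℝ => Real.exp (-a * (t + u) ^ 2)) :=
      (integrable_exp_neg_mul_sq hapos).comp_add_right u
    have hsplit := lintegral_add_compl (μ := (volume : Measure ℝ))
      (fun t => ENNReal.ofReal |num t u|) (measurableSet_Iic (a := (0:ℝ)))
    rw [hM]
    simp only []
    rw [← hsplit, compl_Iic]
    have hright : ∫⁻ t in Set.Ioi (0:ℝ), ENNReal.ofReal |num t u| ∂volume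
        ≤ ENNReal.ofReal (2 * u) := by
      have hcongr : ∫⁻ t in Set.Ioi (0:ℝ), ENNReal.ofReal |num t u| ∂volume
          = ∫⁻ t in Set.Ioi (0:ℝ), ENNReal.ofReal
              (Real.exp (-a * (t - u) ^ 2) - Real.exp (-a * (t + u) ^ 2)) ∂volume := by
        apply setLIntegral_congr_fun_ae measurableSet_Ioi
        apply ae_of_all
        intro t ht
        congr 1
        rw [hnum, abs_sub_comm, abs_of_nonneg]
        simp only [sub_nonneg]
        apply Real.exp_le_exp.2
        nlinarith [mul_pos (mul_pos hapos hu) ht.out]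
      have hsub : Integrable (fun t : ℝ =>
          Real.exp (-a * (t - u) ^ 2) - Real.exp (-a * (t + u) ^ 2)) := hIntm.sub hIntp
      rw [hcongr,
        ← ofReal_integral_eq_lintegral_ofReal
          hsub.integrableOn
          ((ae_restrict_iff' measurableSet_Ioi).2 (ae_of_all _ fun t ht => by
            simp only [Pi.zero_apply, sub_nonneg]
            apply Real.exp_le_exp.2
            nlinarith [mul_pos (mul_pos hapos hu) ht.out]))]
      exact ENNReal.ofReal_le_ofReal (half_right a u hapos hu.le)
    have hleft : ∫⁻ t in Set.Iic (0:ℝ), ENNReal.ofReal |num t u| ∂volume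
        ≤ ENNReal.ofReal (2 * u) := by
      have hcongr : ∫⁻ t in Set.Iic (0:ℝ), ENNReal.ofReal |num t u| ∂volume
          = ∫⁻ t in Set.Iic (0:ℝ), ENNReal.ofReal
              (Real.exp (-a * (t + u) ^ 2) - Real.exp (-a * (t - u) ^ 2)) ∂volume := by
        apply setLIntegral_congr_fun_ae measurableSet_Iic
        apply ae_of_all
        intro t ht
        congr 1
        rw [hnum, abs_of_nonneg]
        simp only [sub_nonneg]
        apply Real.exp_le_exp.2
        nlinarith [mul_nonneg (mul_pos hapos hu).le (neg_nonneg.2 ht.out)]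
      have hsub : Integrable (fun t : ℝ =>
          Real.exp (-a * (t + u) ^ 2) - Real.exp (-a * (t - u) ^ 2)) := hIntp.sub hIntm
      rw [hcongr,
        ← ofReal_integral_eq_lintegral_ofReal
          hsub.integrableOn
          ((ae_restrict_iff' measurableSet_Iic).2 (ae_of_all _ fun t ht => by
            simp only [Pi.zero_apply, sub_nonneg]
            apply Real.exp_le_exp.2
            nlinarith [mul_nonneg (mul_pos hapos hu).le (neg_nonneg.2 ht.out)]))]
      exact ENNReal.ofReal_le_ofReal (half_left a u hapos hu.le)
    calc _ ≤ ENNReal.ofReal (2*u) + ENNReal.ofReal (2*u) := add_le_add hleft hright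
      _ = ENNReal.ofReal (4*u) := by
          rw [← ENNReal.ofReal_add (by positivity) (by positivity)]; ring_nf
  -- outer integral bound
  have houter : (∫⁻ u in Set.Ioi (0:ℝ), ∫⁻ t : ℝ, (‖q t u‖₊ : ENNReal))
      ≤ ENNReal.ofReal (4 / c * U) + ENNReal.ofReal (2 * K * ((1 / c) * L)) := by
    rw [← Ioc_union_Ioi_eq_Ioi hUpos.le,
      lintegral_union measurableSet_Ioi (Ioc_disjoint_Ioi le_rfl)]
    apply add_le_add
    · -- Ioc piece
      calc (∫⁻ u in Set.Ioc (0:ℝ) U, ∫⁻ t : ℝ, (‖q t u‖₊ : ENNReal))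
          ≤ ∫⁻ _u in Set.Ioc (0:ℝ) U, ENNReal.ofReal (4 / c) := by
            apply setLIntegral_mono' measurableSet_Ioc
            intro u hu
            rw [hinner u hu.1]
            have hcu : 0 < c * u := mul_pos hcpos hu.1
            have hsinh : 0 < Real.sinh (c * u) := Real.sinh_pos_iff.2 hcu
            have hsinh' : c * u < Real.sinh (c * u) := Real.self_lt_sinh_iff.2 hcu
            calc M u * ENNReal.ofReal (1 / Real.sinh (c * u))
                ≤ ENNReal.ofReal (4 * u) * ENNReal.ofReal (1 / Real.sinh (c * u)) :=
                  mul_le_mul_left (hMu u hu.1) _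
              _ = ENNReal.ofReal (4 * u * (1 / Real.sinh (c * u))) :=
                  (ENNReal.ofReal_mul (by linarith [hu.1])).symm
              _ ≤ ENNReal.ofReal (4 / c) := by
                  apply ENNReal.ofReal_le_ofReal
                  rw [mul_one_div, div_le_div_iff₀ hsinh hcpos]
                  nlinarith [hu.1]
        _ = ENNReal.ofReal (4 / c) * volume (Set.Ioc (0:ℝ) U) := setLIntegral_const _ _
        _ = ENNReal.ofReal (4 / c * U) := by
            rw [Real.volume_Ioc, ← ENNReal.ofReal_mul (by positivity)]
            norm_num
    · -- Ioi piece
      have htail := tail_sinh c U hcpos hUpos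
      calc (∫⁻ u in Set.Ioi U, ∫⁻ t : ℝ, (‖q t u‖₊ : ENNReal))
          ≤ ∫⁻ u in Set.Ioi U, ENNReal.ofReal (2 * K) *
              ENNReal.ofReal (1 / Real.sinh (c * u)) := by
            apply setLIntegral_mono' measurableSet_Ioi
            intro u hu
            rw [hinner u (hUpos.trans hu)]
            exact mul_le_mul_left (hMK u) _
        _ = ENNReal.ofReal (2 * K) *
            ∫⁻ u in Set.Ioi U, ENNReal.ofReal (1 / Real.sinh (c * u)) :=
            lintegral_const_mul' _ _ ENNReal.ofReal_ne_top
        _ = ENNReal.ofReal (2 * K) *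
            ENNReal.ofReal (∫ u in Set.Ioi U, 1 / Real.sinh (c * u)) := by
            rw [← ofReal_integral_eq_lintegral_ofReal htail.1
              ((ae_restrict_iff' measurableSet_Ioi).2 (ae_of_all _ fun u hu => by
                have : 0 < Real.sinh (c * u) :=
                  Real.sinh_pos_iff.2 (mul_pos hcpos (hUpos.trans hu))
                positivity))]
        _ ≤ ENNReal.ofReal (2 * K) * ENNReal.ofReal ((1 / c) * L) := by
            apply mul_le_mul_right
            exact ENNReal.ofReal_le_ofReal (by rw [hL]; exact htail.2)
        _ = ENNReal.ofReal (2 * K * ((1 / c) * L)) := by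
            rw [← ENNReal.ofReal_mul (by positivity)]
  -- total lintegral bound
  have hLnn : 0 ≤ L := by
    have h1 : 0 < 2 / (c * U) := by positivity
    rw [hL]
    exact Real.log_nonneg (by linarith)
  have htotal : (∫⁻ t : ℝ, (‖b₁ t‖₊ : ENNReal))
      ≤ ENNReal.ofReal (C * (4 / c * U + 2 * K * ((1 / c) * L))) := by
    calc (∫⁻ t : ℝ, (‖b₁ t‖₊ : ENNReal))
        ≤ ∫⁻ t : ℝ, ENNReal.ofReal C * ∫⁻ u in Set.Ioi (0:ℝ), (‖q t u‖₊ : ENNReal) :=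
          lintegral_mono hpt
      _ = ENNReal.ofReal C *
          ∫⁻ t : ℝ, ∫⁻ u in Set.Ioi (0:ℝ), (‖q t u‖₊ : ENNReal) :=
          lintegral_const_mul' _ _ ENNReal.ofReal_ne_top
      _ = ENNReal.ofReal C *
          ∫⁻ u in Set.Ioi (0:ℝ), ∫⁻ t : ℝ, (‖q t u‖₊ : ENNReal) := by
          rw [lintegral_lintegral_swap]
          exact (hqmeas.enorm).aemeasurable
      _ ≤ ENNReal.ofReal C *
          (ENNReal.ofReal (4 / c * U) + ENNReal.ofReal (2 * K * ((1 / c) * L))) :=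
          mul_le_mul_right houter _
      _ = ENNReal.ofReal (C * (4 / c * U + 2 * K * ((1 / c) * L))) := by
          rw [← ENNReal.ofReal_add (by positivity)
              (mul_nonneg (by positivity) (mul_nonneg (by positivity) hLnn)),
            ← ENNReal.ofReal_mul hCpos.le]
  -- constants
  have hargval : 2 / (c * U) = Real.sqrt 2 / Real.pi * (σ * β) := by
    rw [hc, hU]
    exact argval σ β (Real.sqrt 2) hσ hβ (Real.mul_self_sqrt (by norm_num)) hs2
  have hKval : K = Real.sqrt Real.pi / (Real.sqrt 2 * σ) := by
    rw [hK, ha]; exact Kval σ hσ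
  have hsppos : 0 < Real.sqrt Real.pi := Real.sqrt_pos.2 hπ
  have hPpos : 0 < Real.pi ^ ((3:ℝ)/2) := Real.rpow_pos_of_pos hπ _
  have hconst : C * (4 / c * U + 2 * K * ((1 / c) * L))
      = 1 / (Real.sqrt 2 * Real.pi ^ ((3:ℝ)/2)) * (2 / Real.sqrt Real.pi + L) := by
    have e1 : C * (4 / c * U) = 1 / (Real.sqrt 2 * Real.pi ^ ((3:ℝ)/2)) *
        (2 / Real.sqrt Real.pi) := by
      rw [hC, hc, hU]
      exact const1 σ β (Real.sqrt Real.pi) (Real.sqrt 2) (Real.pi ^ ((3:ℝ)/2)) hσ hβ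
        (Real.mul_self_sqrt hπ.le) (Real.mul_self_sqrt (by norm_num)) spP hsppos hs2 hPpos
    have e2 : C * (2 * K * (1 / c)) = 1 / (Real.sqrt 2 * Real.pi ^ ((3:ℝ)/2)) := by
      rw [hC, hc, hKval]
      exact const2 σ β (Real.sqrt Real.pi) (Real.sqrt 2) (Real.pi ^ ((3:ℝ)/2)) hσ hβ
        (Real.mul_self_sqrt hπ.le) (Real.mul_self_sqrt (by norm_num)) spP hsppos hs2 hPpos
    calc C * (4 / c * U + 2 * K * ((1 / c) * L))
        = C * (4 / c * U) + (C * (2 * K * (1 / c))) * L := by ring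
      _ = 1 / (Real.sqrt 2 * Real.pi ^ ((3:ℝ)/2)) * (2 / Real.sqrt Real.pi)
          + (1 / (Real.sqrt 2 * Real.pi ^ ((3:ℝ)/2))) * L := by rw [e1, e2]
      _ = _ := by ring
  -- conclude
  have hRHS : 0 ≤ 1 / (Real.sqrt 2 * Real.pi ^ ((3:ℝ)/2)) *
      (2 / Real.sqrt Real.pi + Real.log (1 + Real.sqrt 2 / Real.pi * (σ * β))) := by
    have hPpos : 0 < Real.pi ^ ((3:ℝ)/2) := Real.rpow_pos_of_pos hπ _
    have hx : 0 < Real.sqrt 2 / Real.pi * (σ * β) := by positivity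
    have hlog : 0 ≤ Real.log (1 + Real.sqrt 2 / Real.pi * (σ * β)) :=
      Real.log_nonneg (by linarith)
    positivity
  calc ∫ t : ℝ, |b₁ t| ≤ ‖∫ t : ℝ, |b₁ t|‖ := le_abs_self _
    _ = ((‖∫ t : ℝ, |b₁ t|‖₊ : ENNReal)).toReal := by
        rw [ENNReal.coe_toReal, coe_nnnorm]
    _ ≤ (ENNReal.ofReal (1 / (Real.sqrt 2 * Real.pi ^ ((3:ℝ)/2)) *
        (2 / Real.sqrt Real.pi + Real.log (1 + Real.sqrt 2 / Real.pi * (σ * β))))).toReal := by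
        apply ENNReal.toReal_mono ENNReal.ofReal_ne_top
        refine le_trans (enorm_integral_le_lintegral_enorm _) ?_
        simp only [enorm_eq_nnnorm]
        have : ∀ t : ℝ, (‖|b₁ t|‖₊ : ENNReal) = (‖b₁ t‖₊ : ENNReal) := by
          intro t; rw [nnnorm_abs]
        simp_rw [this]
        refine htotal.trans ?_
        rw [hconst, hL, hargval]
    _ = _ := ENNReal.toReal_ofReal hRHS
end

section
/- Let W = Σ_{a∈[m]} W_a be a Hamiltonian on n qubits where each term W_a has support of size at most L, and each site is acted on by at most D terms. For an integer k ≥ 1, call a ∈ [m]^k a cluster of length k from site 1 if 1 ∈ supp(W_{a₁}) and for each ℓ = 2,…,k, supp(W_{a_ℓ}) intersects the union of supp(W_{a_j}) for j < ℓ. Then the number of clusters of length k from site 1 is at most D^k · L^{k−1} · (k−1)!. -/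
private def clusterPred {n m : ℕ} (v₀ : Fin n) (E : Fin m → Finset (Fin n)) (k : ℕ)
    (a : Fin (k + 1) → Fin m) : Prop :=
  v₀ ∈ E (a 0) ∧
    ∀ ℓ : Fin (k + 1), 0 < ℓ.1 →
      ∃ x, x ∈ E (a ℓ) ∧ ∃ j : Fin (k + 1), j < ℓ ∧ x ∈ E (a j)

private instance {n m : ℕ} (v₀ : Fin n) (E : Fin m → Finset (Fin n)) (k : ℕ)
    (a : Fin (k + 1) → Fin m) : Decidable (clusterPred v₀ E k a) := by
  unfold clusterPred; infer_instance

private theorem cluster_count_aux (n m L D : ℕ) (v₀ : Fin n)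
    (E : Fin m → Finset (Fin n))
    (hL : ∀ a, (E a).card ≤ L)
    (hD : ∀ v : Fin n, (Finset.univ.filter (fun a => v ∈ E a)).card ≤ D) :
    ∀ k : ℕ, (Finset.univ.filter (clusterPred v₀ E k)).card
      ≤ D ^ (k + 1) * L ^ k * k.factorial := by
  intro k
  induction k with
  | zero =>
    calc (Finset.univ.filter (clusterPred v₀ E 0)).card
        ≤ (Finset.univ.filter (fun b => v₀ ∈ E b)).card := by
          apply Finset.card_le_card_of_injOn (fun a => a 0)
          · intro a ha
            simp only [Finset.mem_coe, Finset.mem_filter, Finset.mem_univ, true_and] at ha ⊢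
            exact ha.1
          · intro a _ a' _ h
            funext i
            have : i = 0 := Fin.fin_one_eq_zero i
            rw [this]; exact h
      _ ≤ D := hD v₀
      _ ≤ D ^ (0 + 1) * L ^ 0 * Nat.factorial 0 := by simp
  | succ k ih =>
    -- restriction map
    set s := Finset.univ.filter (clusterPred v₀ E (k + 1)) with hs
    have key : s.card ≤ ((k + 1) * L * D) * (s.image (fun a => a ∘ Fin.castSucc)).card := by
      apply Finset.card_le_mul_card_image
      intro t ht
      -- fiber over t injects into a biUnion set
      set U : Finset (Fin n) := Finset.univ.biUnion (fun j : Fin (k + 1) => E (t j)) with hU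
      have hUcard : U.card ≤ (k + 1) * L := by
        calc U.card ≤ ∑ j : Fin (k + 1), (E (t j)).card := Finset.card_biUnion_le
          _ ≤ ∑ _j : Fin (k + 1), L := Finset.sum_le_sum (fun j _ => hL (t j))
          _ = (k + 1) * L := by simp [Finset.sum_const, mul_comm]
      set B : Finset (Fin m) := U.biUnion (fun v => Finset.univ.filter (fun b => v ∈ E b))
        with hB
      have hBcard : B.card ≤ (k + 1) * L * D := by
        calc B.card ≤ ∑ v ∈ U, (Finset.univ.filter (fun b => v ∈ E b)).card :=
              Finset.card_biUnion_le
          _ ≤ ∑ _v ∈ U, D := Finset.sum_le_sum (fun v _ => hD v)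
          _ = U.card * D := by simp [Finset.sum_const, mul_comm]
          _ ≤ (k + 1) * L * D := Nat.mul_le_mul_right D hUcard
      refine le_trans ?_ hBcard
      apply Finset.card_le_card_of_injOn (fun a => a (Fin.last (k + 1)))
      · intro a ha
        simp only [Finset.mem_coe, Finset.mem_filter, Finset.mem_univ, true_and, hs] at ha
        obtain ⟨⟨hv, hstep⟩, hrestr⟩ := ha
        obtain ⟨x, hx1, j, hj, hx2⟩ := hstep (Fin.last (k + 1)) (by simp)
        have hjlt : j.1 < k + 1 := hj
        have haj : a j = t ⟨j.1, hjlt⟩ := by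
          have := congrFun hrestr ⟨j.1, hjlt⟩
          simpa [Fin.castSucc, Fin.ext_iff] using this.symm ▸ rfl
        simp only [Finset.mem_coe, hB, Finset.mem_biUnion, Finset.mem_filter, Finset.mem_univ, true_and]
        refine ⟨x, ?_, hx1⟩
        simp only [hU, Finset.mem_biUnion, Finset.mem_univ, true_and]
        exact ⟨⟨j.1, hjlt⟩, haj ▸ hx2⟩
      · intro a ha a' ha' h
        simp only [Finset.mem_coe, Finset.mem_filter] at ha ha'
        funext i
        rcases Fin.eq_castSucc_or_eq_last i with ⟨i', rfl⟩ | rfl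
        · have := congrFun (ha.2.trans ha'.2.symm) i'
          exact this
        · exact h
    have himg : (s.image (fun a => a ∘ Fin.castSucc)).card
        ≤ (Finset.univ.filter (clusterPred v₀ E k)).card := by
      apply Finset.card_le_card
      intro t ht
      simp only [Finset.mem_image] at ht
      obtain ⟨a, ha, rfl⟩ := ht
      simp only [hs, Finset.mem_filter, Finset.mem_univ, true_and] at ha ⊢
      obtain ⟨hv, hstep⟩ := ha
      constructor
      · have : Fin.castSucc (0 : Fin (k + 1)) = (0 : Fin (k + 2)) := rfl
        simpa [Function.comp, this] using hv
      · intro ℓ hℓ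
        obtain ⟨x, hx1, j, hj, hx2⟩ := hstep ℓ.castSucc (by simpa using hℓ)
        have hjlt : j.1 < k + 1 := lt_trans hj ℓ.isLt
        refine ⟨x, hx1, ⟨j.1, hjlt⟩, ?_, ?_⟩
        · simpa [Fin.lt_def] using hj
        · have : Fin.castSucc (⟨j.1, hjlt⟩ : Fin (k + 1)) = j := rfl
          simpa [Function.comp, this] using hx2
    calc s.card ≤ ((k + 1) * L * D) * (s.image (fun a => a ∘ Fin.castSucc)).card := key
      _ ≤ ((k + 1) * L * D) * (D ^ (k + 1) * L ^ k * k.factorial) :=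
          Nat.mul_le_mul_left _ (le_trans himg ih)
      _ = D ^ (k + 2) * L ^ (k + 1) * (k + 1).factorial := by
          rw [Nat.factorial_succ]; ring

/-- Counting clusters. Given a hypergraph on `Fin n` with hyperedges
`E a` (`a : Fin m`) of size at most `L`, each vertex lying in at most `D` hyperedges,
the number of sequences `(a₁,…,a_k)` with `v₀ ∈ E a₁` and each `E a_ℓ` (`ℓ ≥ 2`)
intersecting `E a₁ ∪ ⋯ ∪ E a_{ℓ−1}` is at most `D^k · L^{k−1} · (k−1)!`. -/
theorem cluster_count (n m L D k : ℕ) (hk : 1 ≤ k) (v₀ : Fin n)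
    (E : Fin m → Finset (Fin n))
    (hL : ∀ a, (E a).card ≤ L)
    (hD : ∀ v : Fin n, (Finset.univ.filter (fun a => v ∈ E a)).card ≤ D) :
    Nat.card {a : Fin k → Fin m //
        v₀ ∈ E (a ⟨0, by omega⟩) ∧
        ∀ ℓ : Fin k, 0 < ℓ.1 →
          ∃ x, x ∈ E (a ℓ) ∧ ∃ j : Fin k, j < ℓ ∧ x ∈ E (a j)}
      ≤ D ^ k * L ^ (k - 1) * (k - 1).factorial := by
  obtain ⟨k', rfl⟩ : ∃ k', k = k' + 1 := ⟨k - 1, by omega⟩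
  have h := cluster_count_aux n m L D v₀ E hL hD k'
  rw [Nat.card_eq_fintype_card, Fintype.card_subtype]
  have h' : (Finset.univ.filter (fun a => clusterPred v₀ E k' a)).card ≤ _ := h
  simpa [clusterPred] using h'
end

section
/- Let P be an orthogonal projector (P² = P, P† = P) on a finite-dimensional Hilbert space, and let β, h ≥ 0. Consider the operator H = h·(I ⊗ |1⟩⟨1|) + P ⊗ |0⟩⟨0| on the system tensored with one ancilla qubit. Then the partial trace over the ancilla of exp(−βH) equals exp(−βP) + e^{−βh}·I = (1 + e^{−βh})·exp(−β_eff·P), where β_eff = log((1 + e^{−βh})/(e^{−β} + e^{−βh})). -/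
open Kronecker Matrix

set_option maxHeartbeats 1000000

/-- Partial trace over a single ancilla qubit (the second tensor factor). -/
noncomputable def ptrAncilla {n : Type*} [Fintype n]
    (M : Matrix (n × Fin 2) (n × Fin 2) ℂ) : Matrix n n ℂ :=
  Matrix.of fun i j => ∑ s : Fin 2, M (i, s) (j, s)

/-- The rank-one projector `|0⟩⟨0|` on one qubit. -/
def ket0bra0 : Matrix (Fin 2) (Fin 2) ℂ := !![1, 0; 0, 0]
/-- The rank-one projector `|1⟩⟨1|` on one qubit. -/
def ket1bra1 : Matrix (Fin 2) (Fin 2) ℂ := !![0, 0; 0, 1]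

lemma tail_tsum (c : ℂ) :
    ∑' k : ℕ, ((Nat.factorial (k + 1) : ℂ))⁻¹ * c ^ (k + 1) = Complex.exp c - 1 := by
  have hsum : Summable fun k : ℕ => ((Nat.factorial k : ℂ))⁻¹ * c ^ k := by
    simpa [smul_eq_mul] using NormedSpace.expSeries_summable' (𝕂 := ℂ) c
  have h0 := Summable.tsum_eq_zero_add hsum
  have hexp : Complex.exp c = ∑' k : ℕ, ((Nat.factorial k : ℂ))⁻¹ * c ^ k := by
    rw [Complex.exp_eq_exp_ℂ, NormedSpace.exp_eq_tsum (𝕂 := ℂ)]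
    simp [smul_eq_mul]
  rw [hexp, h0]
  simp

lemma exp_smul_idem {n : Type*} [Fintype n] [DecidableEq n]
    (Q : Matrix n n ℂ) (hQ : Q * Q = Q) (c : ℂ) :
    NormedSpace.exp (c • Q) = 1 + (Complex.exp c - 1) • Q := by
  letI : SeminormedRing (Matrix n n ℂ) := Matrix.linftyOpSemiNormedRing
  letI : NormedRing (Matrix n n ℂ) := Matrix.linftyOpNormedRing
  letI : NormedAlgebra ℂ (Matrix n n ℂ) := Matrix.linftyOpNormedAlgebra
  have hQpow : ∀ k : ℕ, Q ^ (k + 1) = Q := by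
    intro k
    induction k with
    | zero => simp
    | succ k ih => rw [pow_succ, ih, hQ]
  have hsum : Summable fun k : ℕ => ((Nat.factorial k : ℂ))⁻¹ • (c • Q) ^ k :=
    NormedSpace.expSeries_summable' (𝕂 := ℂ) (c • Q)
  rw [NormedSpace.exp_eq_tsum (𝕂 := ℂ)]
  beta_reduce
  rw [Summable.tsum_eq_zero_add hsum]
  have htail : ∀ k : ℕ, ((Nat.factorial (k + 1) : ℂ))⁻¹ • (c • Q) ^ (k + 1)
      = (((Nat.factorial (k + 1) : ℂ))⁻¹ * c ^ (k + 1)) • Q := by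
    intro k
    rw [smul_pow, hQpow, smul_smul]
  have hst : Summable fun k : ℕ => ((Nat.factorial (k + 1) : ℂ))⁻¹ * c ^ (k + 1) := by
    have : Summable fun k : ℕ => ((Nat.factorial k : ℂ))⁻¹ * c ^ k := by
      simpa [smul_eq_mul] using NormedSpace.expSeries_summable' (𝕂 := ℂ) c
    exact (summable_nat_add_iff 1).mpr this
  rw [tsum_congr htail, Summable.tsum_smul_const, tail_tsum]
  · simp
  · exact hst

lemma exp_orth_pair {n : Type*} [Fintype n] [DecidableEq n]
    (Q R : Matrix n n ℂ) (hQ : Q * Q = Q) (hR : R * R = R)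
    (hQR : Q * R = 0) (hRQ : R * Q = 0) (a b : ℂ) :
    NormedSpace.exp (a • Q + b • R)
      = 1 + (Complex.exp a - 1) • Q + (Complex.exp b - 1) • R := by
  have hcomm : Commute (a • Q) (b • R) := by
    unfold Commute SemiconjBy
    rw [smul_mul_smul_comm, smul_mul_smul_comm, hQR, hRQ, smul_zero, smul_zero]
  rw [Matrix.exp_add_of_commute _ _ hcomm, exp_smul_idem Q hQ, exp_smul_idem R hR]
  simp only [mul_add, add_mul, one_mul, mul_one, smul_mul_smul_comm, hQR, smul_zero, add_zero]


lemma ptr_add {n : Type*} [Fintype n] (A B : Matrix (n × Fin 2) (n × Fin 2) ℂ) :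
    ptrAncilla (A + B) = ptrAncilla A + ptrAncilla B := by
  ext i j
  simp [ptrAncilla, Finset.sum_add_distrib]

lemma ptr_smul {n : Type*} [Fintype n] (c : ℂ) (A : Matrix (n × Fin 2) (n × Fin 2) ℂ) :
    ptrAncilla (c • A) = c • ptrAncilla A := by
  ext i j
  simp [ptrAncilla, Finset.mul_sum]
  ring

lemma ptr_one {n : Type*} [Fintype n] [DecidableEq n] :
    ptrAncilla (1 : Matrix (n × Fin 2) (n × Fin 2) ℂ) = (2 : ℂ) • 1 := by
  ext i j
  by_cases hij : i = j <;>
    simp [ptrAncilla, Matrix.one_apply, Prod.ext_iff, hij, Fin.sum_univ_two, two_mul]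

lemma ptr_kron {n : Type*} [Fintype n] (A : Matrix n n ℂ) (B : Matrix (Fin 2) (Fin 2) ℂ) :
    ptrAncilla (A ⊗ₖ B) = (B 0 0 + B 1 1) • A := by
  ext i j
  simp [ptrAncilla, Fin.sum_univ_two, Matrix.kroneckerMap_apply]
  ring

/-- Field-refrigeration gadget: for an orthogonal projector `P` and
`H = h·(I ⊗ |1⟩⟨1|) + P ⊗ |0⟩⟨0|`, tracing out the ancilla of `exp(−βH)` gives
`exp(−βP) + e^{−βh}·I = (1 + e^{−βh})·exp(−β_eff·P)` with
`β_eff = log((1 + e^{−βh})/(e^{−β} + e^{−βh}))`. -/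
theorem ptr_exp_refrigeration {n : Type*} [Fintype n] [DecidableEq n]
    (P : Matrix n n ℂ) (hP : P * P = P) (hP' : Pᴴ = P)
    (β h : ℝ) (hβ : 0 ≤ β) (hh : 0 ≤ h) :
    ptrAncilla (NormedSpace.exp
        ((-(β : ℂ)) • ((h : ℂ) • ((1 : Matrix n n ℂ) ⊗ₖ ket1bra1) + P ⊗ₖ ket0bra0)))
      = NormedSpace.exp ((-(β : ℂ)) • P)
          + (Real.exp (-(β * h)) : ℂ) • (1 : Matrix n n ℂ) ∧
    ptrAncilla (NormedSpace.exp
        ((-(β : ℂ)) • ((h : ℂ) • ((1 : Matrix n n ℂ) ⊗ₖ ket1bra1) + P ⊗ₖ ket0bra0)))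
      = ((1 + Real.exp (-(β * h)) : ℝ) : ℂ) •
          NormedSpace.exp
            ((-(Real.log ((1 + Real.exp (-(β * h)))
                / (Real.exp (-β) + Real.exp (-(β * h)))) : ℂ)) • P) := by
  classical
  set E : ℝ := Real.exp (-(β * h)) with hE
  set Q1 : Matrix (n × Fin 2) (n × Fin 2) ℂ := (1 : Matrix n n ℂ) ⊗ₖ ket1bra1 with hQ1def
  set Q2 : Matrix (n × Fin 2) (n × Fin 2) ℂ := P ⊗ₖ ket0bra0 with hQ2def
  have h11 : ket1bra1 * ket1bra1 = ket1bra1 := by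
    ext i j
    fin_cases i <;> fin_cases j <;>
      simp [ket1bra1, Matrix.mul_apply, Fin.sum_univ_two]
  have h00 : ket0bra0 * ket0bra0 = ket0bra0 := by
    ext i j
    fin_cases i <;> fin_cases j <;>
      simp [ket0bra0, Matrix.mul_apply, Fin.sum_univ_two]
  have h10 : ket1bra1 * ket0bra0 = 0 := by
    ext i j
    fin_cases i <;> fin_cases j <;>
      simp [ket0bra0, ket1bra1, Matrix.mul_apply, Fin.sum_univ_two]
  have h01 : ket0bra0 * ket1bra1 = 0 := by
    ext i j
    fin_cases i <;> fin_cases j <;>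
      simp [ket0bra0, ket1bra1, Matrix.mul_apply, Fin.sum_univ_two]
  have hQ1 : Q1 * Q1 = Q1 := by
    rw [hQ1def, ← Matrix.mul_kronecker_mul, one_mul, h11]
  have hQ2 : Q2 * Q2 = Q2 := by
    rw [hQ2def, ← Matrix.mul_kronecker_mul, hP, h00]
  have hQ12 : Q1 * Q2 = 0 := by
    rw [hQ1def, hQ2def, ← Matrix.mul_kronecker_mul, h10, Matrix.kronecker_zero]
  have hQ21 : Q2 * Q1 = 0 := by
    rw [hQ1def, hQ2def, ← Matrix.mul_kronecker_mul, h01, Matrix.kronecker_zero]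
  have harg : (-(β : ℂ)) • ((h : ℂ) • Q1 + Q2)
      = ((-(β * h) : ℝ) : ℂ) • Q1 + ((-β : ℝ) : ℂ) • Q2 := by
    push_cast
    module
  have hexp : NormedSpace.exp ((-(β : ℂ)) • ((h : ℂ) • Q1 + Q2))
      = 1 + ((E : ℂ) - 1) • Q1 + ((Real.exp (-β) : ℂ) - 1) • Q2 := by
    rw [harg, exp_orth_pair Q1 Q2 hQ1 hQ2 hQ12 hQ21, ← Complex.ofReal_exp,
      ← Complex.ofReal_exp, hE]
  have key : ptrAncilla (NormedSpace.exp
        ((-(β : ℂ)) • ((h : ℂ) • ((1 : Matrix n n ℂ) ⊗ₖ ket1bra1) + P ⊗ₖ ket0bra0)))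
      = ((1 + E : ℝ) : ℂ) • 1 + ((Real.exp (-β) : ℂ) - 1) • P := by
    rw [← hQ1def, ← hQ2def, hexp, ptr_add, ptr_add, ptr_smul, ptr_smul, ptr_one,
      hQ1def, hQ2def, ptr_kron, ptr_kron]
    have e1 : ket1bra1 0 0 + ket1bra1 1 1 = 1 := by norm_num [ket1bra1]
    have e0 : ket0bra0 0 0 + ket0bra0 1 1 = 1 := by norm_num [ket0bra0]
    rw [e1, e0]
    push_cast
    module
  have hexpb : Complex.exp (-(β : ℂ)) = ((Real.exp (-β) : ℝ) : ℂ) := by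
    rw [Complex.ofReal_exp, Complex.ofReal_neg]
  constructor
  · rw [key, exp_smul_idem P hP, hexpb]
    push_cast
    module
  · rw [key, exp_smul_idem P hP]
    have hEpos : 0 < E := Real.exp_pos _
    have hpos : 0 < (1 + E) / (Real.exp (-β) + E) := by positivity
    have hne : (1 + E : ℝ) ≠ 0 := by positivity
    have hval : Complex.exp (-((Real.log ((1 + E) / (Real.exp (-β) + E)) : ℝ) : ℂ))
        = (((Real.exp (-β) + E) / (1 + E) : ℝ) : ℂ) := by
      rw [← Complex.ofReal_neg, ← Complex.ofReal_exp, Real.exp_neg,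
        Real.exp_log hpos, inv_div]
    rw [hval]
    match_scalars
    · push_cast
      ring
    · have hneC : (1 : ℂ) + (E : ℂ) ≠ 0 := by
        exact_mod_cast Complex.ofReal_ne_zero.mpr hne
      push_cast
      field_simp
      ring
end

section
/- Fix c > 0 and β ∈ (0,1). Let t = ⌈c/β⌉ + 1, h = (1/β)·log(4c/β), and β_eff = t·log((1 + e^{−βh})/(e^{−β} + e^{−βh})). Then β_eff ≥ c. -/
lemma exp_le_one_add_two_mul_aux {s : ℝ} (h0 : 0 ≤ s) (h1 : s ≤ 1) :
    Real.exp s ≤ 1 + 2 * s := by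
  have hconv := convexOn_exp.2 (Set.mem_univ (0:ℝ)) (Set.mem_univ (1:ℝ))
    (by linarith : (0:ℝ) ≤ 1 - s) h0 (by ring)
  simp only [smul_eq_mul, mul_zero, mul_one, zero_add, Real.exp_zero] at hconv
  have he : Real.exp 1 < 2.7182818286 := Real.exp_one_lt_d9
  nlinarith [Real.exp_pos (1:ℝ)]

lemma exp_neg_le_aux {ν : ℝ} (h0 : 0 ≤ ν) (h1 : ν ≤ 1) :
    Real.exp (-ν) ≤ 1 - ν / 2 := by
  have hconv := convexOn_exp.2 (Set.mem_univ (0:ℝ)) (Set.mem_univ (-1:ℝ))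
    (by linarith : (0:ℝ) ≤ 1 - ν) h0 (by ring)
  simp only [smul_eq_mul, mul_zero, mul_neg_one, zero_add, Real.exp_zero] at hconv
  have he : (2.7182818283:ℝ) < Real.exp 1 := Real.exp_one_gt_d9
  have hinv : Real.exp (-1) = (Real.exp 1)⁻¹ := Real.exp_neg 1
  have hepos : (0:ℝ) < Real.exp 1 := Real.exp_pos 1
  have h2 : Real.exp (-1:ℝ) ≤ 1/2 := by
    rw [hinv]
    rw [inv_le_comm₀ (by positivity) (by norm_num)]
    linarith
  nlinarith [hconv, h2, h0]

/-- Effective inverse temperature bound: for `c > 0`, `β ∈ (0,1)`, `t = ⌈c/β⌉ + 1`,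
`h = (1/β)·log(4c/β)`, and
`β_eff = t·log((1 + e^{−βh})/(e^{−β} + e^{−βh}))`, one has `β_eff ≥ c`. -/
theorem beta_eff_ge (c β : ℝ) (hc : 0 < c) (hβ : 0 < β) (hβ1 : β < 1)
    (t : ℕ) (ht : t = ⌈c / β⌉₊ + 1)
    (h : ℝ) (hh : h = 1 / β * Real.log (4 * c / β)) :
    c ≤ (t : ℝ) * Real.log ((1 + Real.exp (-(β * h)))
        / (Real.exp (-β) + Real.exp (-(β * h)))) := by
  have hβne : β ≠ 0 := ne_of_gt hβ
  have h4cβ : (0:ℝ) < 4 * c / β := by positivity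
  have hβh : β * h = Real.log (4 * c / β) := by
    rw [hh]; field_simp
  have hA : Real.exp (-(β * h)) = β / (4 * c) := by
    rw [hβh, Real.exp_neg, Real.exp_log h4cβ, inv_div]
  -- t is at least (c+β)/β
  have hceil : c / β ≤ (⌈c / β⌉₊ : ℝ) := Nat.le_ceil _
  have htge : (c + β) / β ≤ (t : ℝ) := by
    rw [ht]; push_cast
    rw [div_le_iff₀ hβ]
    rw [div_le_iff₀ hβ] at hceil
    linarith
  have htpos : (0:ℝ) < (t : ℝ) := by
    have : (0:ℝ) < (c + β) / β := by positivity
    linarith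
  set s : ℝ := c / t with hs
  have hspos : 0 < s := by positivity
  have hsle : s ≤ c * β / (c + β) := by
    rw [hs, div_le_div_iff₀ htpos (by positivity)]
    calc c * (c + β) = ((c + β) / β) * (c * β) := by field_simp
      _ ≤ (t : ℝ) * (c * β) := by
          apply mul_le_mul_of_nonneg_right htge (by positivity)
      _ = c * β * t := by ring
  have hsltβ : s < β := by
    have : c * β / (c + β) < β := by
      rw [div_lt_iff₀ (by positivity)]; nlinarith
    linarith
  have hslt1 : s < 1 := lt_trans hsltβ hβ1
  -- bounds
  have hb1 : Real.exp s - 1 ≤ 2 * s :=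
    by linarith [exp_le_one_add_two_mul_aux hspos.le hslt1.le]
  have hb2 : Real.exp (-(β - s)) ≤ 1 - (β - s) / 2 :=
    exp_neg_le_aux (by linarith) (by linarith)
  -- key inequality: A * (exp s - 1) ≤ 1 - exp(s - β)
  have hApos : (0:ℝ) < β / (4 * c) := by positivity
  have hkey : (β / (4 * c)) * (Real.exp s - 1) ≤ 1 - Real.exp (s - β) := by
    have h1 : (β / (4 * c)) * (Real.exp s - 1) ≤ (β / (4 * c)) * (2 * s) := by
      apply mul_le_mul_of_nonneg_left hb1 hApos.le
    have h2 : (β / (4 * c)) * (2 * s) ≤ (β - s) / 2 := by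
      rw [div_mul_eq_mul_div, div_le_div_iff₀ (by positivity) (by norm_num)]
      have hcb : (0:ℝ) < c + β := by positivity
      have : s * (c + β) ≤ c * β := by
        have := mul_le_mul_of_nonneg_right hsle hcb.le
        have heq : c * β / (c + β) * (c + β) = c * β := by field_simp
        linarith [heq ▸ this]
      nlinarith
    have h3 : (β - s) / 2 ≤ 1 - Real.exp (s - β) := by
      have : Real.exp (s - β) = Real.exp (-(β - s)) := by ring_nf
      rw [this]; linarith
    linarith
  -- convert goal
  rw [hA]
  have hD : (0:ℝ) < Real.exp (-β) + β / (4 * c) := by positivity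
  have hR : (0:ℝ) < (1 + β / (4 * c)) / (Real.exp (-β) + β / (4 * c)) := by positivity
  have hgoal : s ≤ Real.log ((1 + β / (4 * c)) / (Real.exp (-β) + β / (4 * c))) := by
    rw [Real.le_log_iff_exp_le hR, le_div_iff₀ hD]
    have hexp : Real.exp s * Real.exp (-β) = Real.exp (s - β) := by
      rw [← Real.exp_add]; congr 1
    nlinarith [hkey, hexp]
  calc c = (t : ℝ) * s := by rw [hs, mul_comm, div_mul_cancel₀ c htpos.ne']
    _ ≤ _ := by apply mul_le_mul_of_nonneg_left hgoal htpos.le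
end

section
/- Let Δ ≥ 1/β for some β > 0, set η = σ = √(Δ/β), γ(ω) = exp(−(ω+Δ)²/(2η²)), and f̂(ν) = (2π)^{−1/4}·σ^{−1/2}·exp(−ν²/(4σ²)). Then for any h with 0 ≤ h ≤ 1/β and Δ = 1/β (so η = σ = 1/β), one has ∫_{−∞}^{∞} γ(ω)·f̂(ω+h)² dω = (1/√2)·exp(−(1−βh)²/4) ≥ e^{−1/4}/√2; and for h > 1/β with Δ = h, the integral equals exactly 1/√2. -/
open Real MeasureTheory

/-- The Gaussian overlap `∫ γ(ω)·f̂(ω+h)² dω`, where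
`γ(ω) = exp(−(ω+Δ)²/(2η²))` and `f̂(ν) = (2π)^{−1/4}·σ^{−1/2}·exp(−ν²/(4σ²))`. -/
noncomputable def gaussOverlap (σ η Δ h : ℝ) : ℝ :=
  ∫ ω : ℝ, Real.exp (-(ω + Δ) ^ 2 / (2 * η ^ 2)) *
    ((2 * Real.pi) ^ (-(1 / 4) : ℝ) * σ ^ (-(1 / 2) : ℝ)
      * Real.exp (-(ω + h) ^ 2 / (4 * σ ^ 2))) ^ 2

lemma gaussOverlap_eq (s Δ h : ℝ) (hs : 0 < s) :
    gaussOverlap s s Δ h = 1 / Real.sqrt 2 * Real.exp (-(Δ - h) ^ 2 / (4 * s ^ 2)) := by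
  have hπ : 0 < Real.pi := Real.pi_pos
  have h2π : (0:ℝ) ≤ 2 * Real.pi := by positivity
  have h1 : ((2 * Real.pi) ^ (-(1 / 4) : ℝ)) ^ 2 = (2 * Real.pi) ^ (-(1 / 2) : ℝ) := by
    rw [← Real.rpow_natCast ((2 * Real.pi) ^ (-(1 / 4) : ℝ)) 2, ← Real.rpow_mul h2π]
    norm_num
  have h2 : (s ^ (-(1 / 2) : ℝ)) ^ 2 = s⁻¹ := by
    rw [← Real.rpow_natCast (s ^ (-(1 / 2) : ℝ)) 2, ← Real.rpow_mul hs.le]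
    norm_num [Real.rpow_neg_one]
  have key : ∀ ω : ℝ,
      Real.exp (-(ω + Δ) ^ 2 / (2 * s ^ 2)) *
        ((2 * Real.pi) ^ (-(1 / 4) : ℝ) * s ^ (-(1 / 2) : ℝ)
          * Real.exp (-(ω + h) ^ 2 / (4 * s ^ 2))) ^ 2
      = ((2 * Real.pi) ^ (-(1 / 2) : ℝ) * s⁻¹ * Real.exp (-(Δ - h) ^ 2 / (4 * s ^ 2)))
          * Real.exp (-(1 / s ^ 2) * (ω + (Δ + h) / 2) ^ 2) := by
    intro ω
    rw [mul_pow, mul_pow, h1, h2, ← Real.exp_nat_mul]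
    have hexp : Real.exp (-(ω + Δ) ^ 2 / (2 * s ^ 2)) * Real.exp ((2:ℕ) * (-(ω + h) ^ 2 / (4 * s ^ 2)))
        = Real.exp (-(Δ - h) ^ 2 / (4 * s ^ 2)) * Real.exp (-(1 / s ^ 2) * (ω + (Δ + h) / 2) ^ 2) := by
      rw [← Real.exp_add, ← Real.exp_add]
      congr 1
      push_cast
      field_simp
      ring
    calc Real.exp (-(ω + Δ) ^ 2 / (2 * s ^ 2)) *
          ((2 * Real.pi) ^ (-(1 / 2) : ℝ) * s⁻¹ * Real.exp ((2:ℕ) * (-(ω + h) ^ 2 / (4 * s ^ 2))))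
        = (2 * Real.pi) ^ (-(1 / 2) : ℝ) * s⁻¹ *
            (Real.exp (-(ω + Δ) ^ 2 / (2 * s ^ 2)) * Real.exp ((2:ℕ) * (-(ω + h) ^ 2 / (4 * s ^ 2)))) := by ring
      _ = _ := by rw [hexp]; ring
  unfold gaussOverlap
  simp only [key]
  rw [MeasureTheory.integral_const_mul]
  rw [show (∫ a : ℝ, Real.exp (-(1 / s ^ 2) * (a + (Δ + h) / 2) ^ 2))
      = ∫ a : ℝ, Real.exp (-(1 / s ^ 2) * a ^ 2) from
    MeasureTheory.integral_add_right_eq_self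
      (f := fun x : ℝ => Real.exp (-(1 / s ^ 2) * x ^ 2)) ((Δ + h) / 2),
    integral_gaussian]
  have hsq : Real.sqrt (Real.pi / (1 / s ^ 2)) = Real.sqrt Real.pi * s := by
    rw [div_div_eq_mul_div, div_one, Real.sqrt_mul hπ.le, Real.sqrt_sq hs.le]
  have hrp : (2 * Real.pi) ^ (-(1 / 2) : ℝ) = (Real.sqrt 2 * Real.sqrt Real.pi)⁻¹ := by
    rw [Real.rpow_neg h2π, ← Real.sqrt_eq_rpow, Real.sqrt_mul (by norm_num)]
  rw [hsq, hrp]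
  have h2p : Real.sqrt 2 ≠ 0 := by positivity
  have hpp : Real.sqrt Real.pi ≠ 0 := by positivity
  field_simp

/-- Dissipative contraction overlaps. For `β > 0` and `0 ≤ h`:
if `h ≤ 1/β` (with `Δ = 1/β`, `η = σ = 1/β`) the overlap equals
`(1/√2)·exp(−(1−βh)²/4) ≥ e^{−1/4}/√2`; if `h > 1/β` (with `Δ = h`,
`η = σ = √(h/β)`) the overlap equals `1/√2`. -/
theorem gaussOverlap_eval (β h : ℝ) (hβ : 0 < β) (hh : 0 ≤ h) :
    (h ≤ 1 / β →
      gaussOverlap (1 / β) (1 / β) (1 / β) h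
          = 1 / Real.sqrt 2 * Real.exp (-(1 - β * h) ^ 2 / 4) ∧
      Real.exp (-(1 / 4)) / Real.sqrt 2 ≤ gaussOverlap (1 / β) (1 / β) (1 / β) h) ∧
    (1 / β < h →
      gaussOverlap (Real.sqrt (h / β)) (Real.sqrt (h / β)) h h = 1 / Real.sqrt 2) := by
  constructor
  · intro hle
    have hs : (0:ℝ) < 1 / β := by positivity
    have heq : gaussOverlap (1 / β) (1 / β) (1 / β) h
        = 1 / Real.sqrt 2 * Real.exp (-(1 - β * h) ^ 2 / 4) := by
      rw [gaussOverlap_eq _ _ _ hs]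
      congr 2
      have hβ' : (β:ℝ) ≠ 0 := hβ.ne'
      field_simp
    refine ⟨heq, ?_⟩
    rw [heq]
    have h2 : β * h ≤ 1 := by
      calc β * h ≤ β * (1 / β) := by gcongr
        _ = 1 := by field_simp
    have hexp : Real.exp (-(1 / 4)) ≤ Real.exp (-(1 - β * h) ^ 2 / 4) := by
      apply Real.exp_le_exp.mpr
      have h1 : 0 ≤ β * h := by positivity
      nlinarith [sq_nonneg (β * h)]
    calc Real.exp (-(1 / 4)) / Real.sqrt 2 = 1 / Real.sqrt 2 * Real.exp (-(1 / 4)) := by ring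
      _ ≤ 1 / Real.sqrt 2 * Real.exp (-(1 - β * h) ^ 2 / 4) := by
          apply mul_le_mul_of_nonneg_left hexp (by positivity)
  · intro hlt
    have hpos : (0:ℝ) < h / β := by
      have : 0 < h := lt_trans (by positivity) hlt
      positivity
    have hs : 0 < Real.sqrt (h / β) := Real.sqrt_pos.mpr hpos
    rw [gaussOverlap_eq _ _ _ hs]
    simp
end

section
/- Let ν₁, ν₂ ∈ ℝ and set s₊ = ν₁ + ν₂, s₋ = ν₁ − ν₂. Then (ω − ν₁)² + (ω − ν₂)² = 2(ω − s₊/2)² + s₋²/2 for all ω ∈ ℝ; consequently, for σ, η, Δ, β > 0 with β(η² + σ²) = 2Δ, the quantity α(ν₁,ν₂) := exp(−s₋²/(8σ²))·(η/√(η²+σ²))·exp(−(Δ + s₊/2)²/(2(η²+σ²))) satisfies the KMS symmetry α(ν₁,ν₂)·e^{β(ν₁+ν₂)/2} = α(−ν₂,−ν₁). -/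
/-- Completing the square in Bohr frequencies, and the resulting KMS symmetry:
for `s₊ = ν₁ + ν₂`, `s₋ = ν₁ − ν₂`, one has
`(ω−ν₁)² + (ω−ν₂)² = 2(ω−s₊/2)² + s₋²/2`, and if `β(η²+σ²) = 2Δ` then
`α(ν₁,ν₂)·e^{β(ν₁+ν₂)/2} = α(−ν₂,−ν₁)` where
`α(ν₁,ν₂) = exp(−s₋²/(8σ²))·(η/√(η²+σ²))·exp(−(Δ+s₊/2)²/(2(η²+σ²)))`. -/
theorem kms_symmetry (σ η Δ β : ℝ) (hσ : 0 < σ) (hη : 0 < η) (hΔ : 0 < Δ)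
    (hβ : 0 < β) (hdb : β * (η ^ 2 + σ ^ 2) = 2 * Δ)
    (α : ℝ → ℝ → ℝ)
    (hα : ∀ ν₁ ν₂ : ℝ, α ν₁ ν₂
      = Real.exp (-(ν₁ - ν₂) ^ 2 / (8 * σ ^ 2))
        * (η / Real.sqrt (η ^ 2 + σ ^ 2))
        * Real.exp (-(Δ + (ν₁ + ν₂) / 2) ^ 2 / (2 * (η ^ 2 + σ ^ 2)))) :
    (∀ ω ν₁ ν₂ : ℝ,
      (ω - ν₁) ^ 2 + (ω - ν₂) ^ 2
        = 2 * (ω - (ν₁ + ν₂) / 2) ^ 2 + (ν₁ - ν₂) ^ 2 / 2) ∧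
    ∀ ν₁ ν₂ : ℝ,
      α ν₁ ν₂ * Real.exp (β * (ν₁ + ν₂) / 2) = α (-ν₂) (-ν₁) := by
  constructor
  · intro ω ν₁ ν₂; ring
  · intro ν₁ ν₂
    rw [hα, hα]
    have hK : (η ^ 2 + σ ^ 2) ≠ 0 := by positivity
    have h1 : (-(-ν₂ - -ν₁) ^ 2 : ℝ) = -(ν₁ - ν₂) ^ 2 := by ring
    rw [h1, mul_assoc, mul_assoc, mul_assoc, ← Real.exp_add]
    congr 2
    have : β = 2 * Δ / (η ^ 2 + σ ^ 2) := by rw [eq_div_iff hK]; exact hdb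
    subst this
    field_simp
    ring
end
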